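/- arXiv:math/0607197 — 2 statements merged into one kernel-verified Lean document; each statement's English description precedes it below -/
import Mathlib

section
/- For r, H > 0 and a > 0 large enough that r/2 + H/(2a) ≤ r, the control ũ(x) = a on [0, r/2 + H/(2a)] and ũ(x) = −a on (r/2 + H/(2a), r] is admissible (its integral over [0,r] equals H) and its resistance equals r/(1+a²); hence the infimum of the resistance over unrestricted admissible controls is 0 and is not attained. -/
open MeasureTheory intervalIntegral

lemma bdd_intInt {f : ℝ → ℝ} (hf : Measurable f) {C : ℝ} (h : ∀ x, |f x| ≤ C) (a b : ℝ) :
    IntervalIntegrable f MeasureTheory.volume a b := by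
  rw [intervalIntegrable_iff]
  exact Measure.integrableOn_of_bounded (by simp [Set.uIoc, Real.volume_Ioc])
    hf.aestronglyMeasurable (Filter.Eventually.of_forall h)

lemma zig_meas (c a : ℝ) : Measurable (fun x : ℝ => if x ≤ c then a else -a) :=
  Measurable.ite measurableSet_Iic measurable_const measurable_const

lemma zig (r H a : ℝ) (hr : 0 < r) (hH : 0 < H) (ha : 0 < a) (hle : r / 2 + H / (2 * a) ≤ r) :
    (∫ x in (0:ℝ)..r, (if x ≤ r / 2 + H / (2 * a) then a else -a)) = H := by
  set c := r / 2 + H / (2 * a) with hc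
  have hc0 : 0 ≤ c := by positivity
  have hint : ∀ p q : ℝ, IntervalIntegrable (fun x => if x ≤ c then a else -a) volume p q := by
    intro p q
    exact bdd_intInt (zig_meas c a) (C := |a|) (fun x => by split <;> simp) p q
  rw [← intervalIntegral.integral_add_adjacent_intervals (b := c) (hint 0 c) (hint c r)]
  have h1 : (∫ x in (0:ℝ)..c, (if x ≤ c then a else -a)) = a * c := by
    rw [intervalIntegral.integral_congr (g := fun _ => a)]
    · simp [mul_comm]
    · intro x hx
      rw [Set.uIcc_of_le hc0] at hx
      simp [hx.2]
  have h2 : (∫ x in c..r, (if x ≤ c then a else -a)) = -a * (r - c) := by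
    have : (∫ x in c..r, (if x ≤ c then a else -a)) = ∫ x in c..r, (-a : ℝ) := by
      rw [intervalIntegral.integral_of_le hle, intervalIntegral.integral_of_le hle]
      refine MeasureTheory.setIntegral_congr_fun measurableSet_Ioc (fun x hx => ?_)
      simp [not_le.2 hx.1]
    rw [this, intervalIntegral.integral_const, smul_eq_mul]; ring
  rw [h1, h2, hc]
  have ha' : a ≠ 0 := ha.ne'
  field_simp
  ring

lemma zig_res (r H a : ℝ) (ha : 0 < a) :
    (∫ x in (0:ℝ)..r,
      1 / (1 + (if x ≤ r / 2 + H / (2 * a) then a else -a) ^ 2)) = r / (1 + a ^ 2) := by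
  have : ∀ x : ℝ, 1 / (1 + (if x ≤ r / 2 + H / (2 * a) then a else -a) ^ 2)
      = 1 / (1 + a ^ 2) := by
    intro x; split <;> simp [neg_pow]
  simp only [this, intervalIntegral.integral_const, smul_eq_mul, sub_zero]
  ring

lemma res_mem (r H : ℝ) (hr : 0 < r) (hH : 0 < H) (a : ℝ) (ha : 0 < a)
    (hle : r / 2 + H / (2 * a) ≤ r) :
    r / (1 + a ^ 2) ∈ {R : ℝ | ∃ u : ℝ → ℝ, Measurable u ∧
        IntervalIntegrable u MeasureTheory.volume 0 r ∧
        (∫ x in (0:ℝ)..r, u x) = H ∧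
        R = ∫ x in (0:ℝ)..r, 1 / (1 + (u x) ^ 2)} := by
  refine ⟨fun x => if x ≤ r / 2 + H / (2 * a) then a else -a, zig_meas _ _,
    bdd_intInt (zig_meas _ _) (C := |a|) (fun x => by split <;> simp) 0 r,
    zig r H a hr hH ha hle, (zig_res r H a ha).symm⟩

/-- The zig-zag control `ũ = a` on `[0, r/2 + H/(2a)]`, `ũ = -a` afterwards, is
admissible (`∫₀ʳ ũ = H`) with resistance `r/(1+a²)`; consequently the infimum of
the resistance over admissible controls is `0`, and it is not attained. -/
theorem stmt_10 (r H : ℝ) (hr : 0 < r) (hH : 0 < H) :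
    (∀ a : ℝ, 0 < a → r / 2 + H / (2 * a) ≤ r →
      (∫ x in (0:ℝ)..r, (if x ≤ r / 2 + H / (2 * a) then a else -a)) = H ∧
      (∫ x in (0:ℝ)..r,
        1 / (1 + (if x ≤ r / 2 + H / (2 * a) then a else -a) ^ 2)) = r / (1 + a ^ 2)) ∧
    IsGLB {R : ℝ | ∃ u : ℝ → ℝ, Measurable u ∧
        IntervalIntegrable u MeasureTheory.volume 0 r ∧
        (∫ x in (0:ℝ)..r, u x) = H ∧
        R = ∫ x in (0:ℝ)..r, 1 / (1 + (u x) ^ 2)} 0 ∧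
    (0 : ℝ) ∉ {R : ℝ | ∃ u : ℝ → ℝ, Measurable u ∧
        IntervalIntegrable u MeasureTheory.volume 0 r ∧
        (∫ x in (0:ℝ)..r, u x) = H ∧
        R = ∫ x in (0:ℝ)..r, 1 / (1 + (u x) ^ 2)} := by
  refine ⟨fun a ha hle => ⟨zig r H a hr hH ha hle, zig_res r H a ha⟩, ⟨?_, ?_⟩, ?_⟩
  · -- lower bound
    rintro R ⟨u, hu, hui, hint, rfl⟩
    exact intervalIntegral.integral_nonneg hr.le (fun x _ => by positivity)
  · -- greatest lower bound
    intro b hb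
    by_contra hb0
    push_neg at hb0
    set a : ℝ := 1 + max (H / r) (r / b) with hadef
    have ha1 : 1 ≤ a := by
      have h : 0 ≤ max (H / r) (r / b) := le_max_of_le_left (by positivity)
      rw [hadef]; linarith
    have ha : 0 < a := lt_of_lt_of_le one_pos ha1
    have haHr : H / r ≤ a := by
      have := le_max_left (H / r) (r / b); linarith
    have harb : r / b ≤ a := by
      have := le_max_right (H / r) (r / b); linarith
    have hle : r / 2 + H / (2 * a) ≤ r := by
      rw [div_le_iff₀ hr] at haHr
      have h2 : H / (2 * a) ≤ r / 2 := by
        rw [div_le_div_iff₀ (by positivity) (by norm_num)]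
        nlinarith
      linarith
    have hmem := res_mem r H hr hH a ha hle
    have hble := hb hmem
    have : r / (1 + a ^ 2) < b := by
      rw [div_lt_iff₀ (by positivity)]
      rw [div_le_iff₀ hb0] at harb
      nlinarith
    linarith
  · -- not attained
    rintro ⟨u, hu, hui, hint, h0⟩
    have hmeas : Measurable fun x => 1 / (1 + (u x) ^ 2) := by
      simp only [one_div]
      exact (measurable_const.add ((hu.pow_const 2))).inv
    have hbdd : ∀ x, |1 / (1 + (u x) ^ 2)| ≤ 1 := by
      intro x
      rw [abs_of_nonneg (by positivity)]
      rw [div_le_one (by positivity)]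
      nlinarith [sq_nonneg (u x)]
    have hii := bdd_intInt hmeas hbdd 0 r
    have hpos : 0 < ∫ x in (0:ℝ)..r, 1 / (1 + (u x) ^ 2) := by
      apply intervalIntegral.intervalIntegral_pos_of_pos_on hii _ hr
      intro x _; positivity
    linarith [h0 ▸ hpos]
end

section
/- For r, H > 0 with H > r, among all controls of the form u(x) = 0 on [0,ξ₁], u(x) = H/(ξ₂−ξ₁) on [ξ₁,ξ₂], u(x) = 0 on [ξ₂,r] with 0 ≤ ξ₁ ≤ ξ₂ ≤ r, the resistance ξ₁ + (ξ₂−ξ₁)³/((ξ₂−ξ₁)²+H²) + (r−ξ₂) is uniquely minimized at ξ₁ = 0, ξ₂ = r, with minimum value r³/(r²+H²). -/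
/-- For `H > r > 0`, among profiles flat on `[0,ξ₁]`, linear with rise `H` on
`[ξ₁,ξ₂]`, flat on `[ξ₂,r]`, the resistance
`ξ₁ + (ξ₂-ξ₁)³/((ξ₂-ξ₁)²+H²) + (r-ξ₂)` is uniquely minimized at `ξ₁ = 0`,
`ξ₂ = r`, with minimum value `r³/(r²+H²)`. -/
theorem stmt_17 (r H : ℝ) (hr : 0 < r) (hH : r < H) :
    (∀ ξ₁ ξ₂ : ℝ, 0 ≤ ξ₁ → ξ₁ ≤ ξ₂ → ξ₂ ≤ r →
      ξ₁ + (ξ₂ - ξ₁) ^ 3 / ((ξ₂ - ξ₁) ^ 2 + H ^ 2) + (r - ξ₂) ≥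
        r ^ 3 / (r ^ 2 + H ^ 2) ∧
      (ξ₁ + (ξ₂ - ξ₁) ^ 3 / ((ξ₂ - ξ₁) ^ 2 + H ^ 2) + (r - ξ₂) =
        r ^ 3 / (r ^ 2 + H ^ 2) → ξ₁ = 0 ∧ ξ₂ = r)) ∧
    (0:ℝ) + (r - 0) ^ 3 / ((r - 0) ^ 2 + H ^ 2) + (r - r) = r ^ 3 / (r ^ 2 + H ^ 2) := by
  have hH0 : 0 < H := hr.trans hH
  constructor
  · intro ξ₁ ξ₂ h1 h2 h3
    set d := ξ₂ - ξ₁ with hd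
    have hd0 : 0 ≤ d := by simp [hd]; linarith
    have hdr : d ≤ r := by simp [hd]; linarith
    have hden1 : (0:ℝ) < d ^ 2 + H ^ 2 := by positivity
    have hden2 : (0:ℝ) < r ^ 2 + H ^ 2 := by positivity
    have key : ξ₁ + d ^ 3 / (d ^ 2 + H ^ 2) + (r - ξ₂) - r ^ 3 / (r ^ 2 + H ^ 2)
        = (r - d) * (H ^ 2 * (H ^ 2 - d * r)) / ((d ^ 2 + H ^ 2) * (r ^ 2 + H ^ 2)) := by
      field_simp
      ring
    have hpos : 0 < H ^ 2 - d * r := by nlinarith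
    have hnum : 0 ≤ (r - d) * (H ^ 2 * (H ^ 2 - d * r)) := by
      have : 0 ≤ r - d := by linarith
      positivity
    constructor
    · have := div_nonneg hnum (le_of_lt (mul_pos hden1 hden2))
      linarith [key ▸ this]
    · intro heq
      have hz : (r - d) * (H ^ 2 * (H ^ 2 - d * r)) / ((d ^ 2 + H ^ 2) * (r ^ 2 + H ^ 2)) = 0 := by
        rw [← key]; linarith
      have hz2 : (r - d) * (H ^ 2 * (H ^ 2 - d * r)) = 0 := by
        rcases div_eq_zero_iff.mp hz with h | h
        · exact h
        · exact absurd h (ne_of_gt (mul_pos hden1 hden2))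
      have hrd : r - d = 0 := by
        rcases mul_eq_zero.mp hz2 with h | h
        · exact h
        · exfalso; rcases mul_eq_zero.mp h with h' | h' <;> nlinarith
      constructor <;> [skip; skip] <;> simp [hd] at hrd <;> linarith
  · have : r - 0 = r := by ring
    rw [this]; ring
end
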